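/- Assume supp(ν) ⊂ U_ν. Let K be a compact subset of ℝ \ (closure(U_ν) ∪ Θ). Then for all N large enough K ⊂ ℝ \ U_N and Ψ_N = H_N on K, and Ψ_N converges uniformly to Ψ_ν = H_ν on K, i.e. sup_{x ∈ K} |Ψ_N(x) − Ψ_ν(x)| → 0 as N → ∞. -/

import Mathlib

open MeasureTheory Filter Topology Set
open scoped ENNReal

/-- `v_μ(u) = inf {v ≥ 0 : ∫ dμ(x)/((u−x)² + v²) ≤ 1}`. -/
noncomputable def vF (μ : Measure ℝ) (u : ℝ) : ℝ :=
  sInf {v : ℝ | 0 ≤ v ∧ ∫ x, ((u - x) ^ 2 + v ^ 2)⁻¹ ∂μ ≤ 1}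

/-- `U_μ = {t : v_μ(t) > 0}`. -/
def USet (μ : Measure ℝ) : Set ℝ := {t | 0 < vF μ t}

/-- `H_μ(z) = z + ∫ dμ(x)/(z−x)`. -/
noncomputable def HF (μ : Measure ℝ) (z : ℝ) : ℝ := z + ∫ x, (z - x)⁻¹ ∂μ

/-- `Ψ_μ(t) = t + ∫ (t−x) dμ(x)/((t−x)² + v_μ(t)²)`. -/
noncomputable def PsiF (μ : Measure ℝ) (t : ℝ) : ℝ :=
  t + ∫ x, (t - x) / ((t - x) ^ 2 + vF μ t ^ 2) ∂μ

/-- The (topological) support of a measure on ℝ. -/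
def MeasSupp (μ : Measure ℝ) : Set ℝ := {x | ∀ U ∈ nhds x, μ U ≠ 0}

/-- `ν̂_N = (1/(N−r)) Σ_{j=1}^{N−r} δ_{β_j(N)}`. -/
noncomputable def hatNu (r : ℕ) (β : ℕ → ℕ → ℝ) (N : ℕ) : Measure ℝ :=
  ((N - r : ℕ) : ℝ≥0∞)⁻¹ • ∑ i ∈ Finset.range (N - r), Measure.dirac (β N i)

lemma vF_nonneg (μ : Measure ℝ) (u : ℝ) : 0 ≤ vF μ u :=
  Real.sInf_nonneg fun _ hx => hx.1

lemma meas_aux (w v : ℝ) : Measurable (fun y : ℝ => ((w - y) ^ 2 + v ^ 2)⁻¹) :=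
  (((measurable_const.sub measurable_id).pow_const 2).add_const _).inv

lemma meas_aux2 (w : ℝ) : Measurable (fun y : ℝ => ((w - y) ^ 2)⁻¹) :=
  ((measurable_const.sub measurable_id).pow_const 2).inv

lemma integrable_of_ae_bound {μ : Measure ℝ} [IsFiniteMeasure μ] {f : ℝ → ℝ} {C : ℝ}
    (hm : AEStronglyMeasurable f μ) (h : ∀ᵐ y ∂μ, |f y| ≤ C) : Integrable f μ :=
  (integrable_const C).mono' hm (by simpa using h)

lemma integral_abs_sub_le {μ : Measure ℝ} [IsProbabilityMeasure μ] {f g : ℝ → ℝ} {L : ℝ}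
    (hf : Integrable f μ) (hg : Integrable g μ) (h : ∀ᵐ y ∂μ, |f y - g y| ≤ L) :
    |∫ y, f y ∂μ - ∫ y, g y ∂μ| ≤ L := by
  rw [← integral_sub hf hg]
  have := norm_integral_le_of_norm_le_const (μ := μ) (f := fun y => f y - g y) (C := L)
    (by simpa using h)
  simpa [Real.norm_eq_abs, measure_univ] using this

lemma vF_eq_zero {μ : Measure ℝ} {u : ℝ}
    (h : ∀ v : ℝ, 0 < v → ∫ x, ((u - x) ^ 2 + v ^ 2)⁻¹ ∂μ ≤ 1) : vF μ u = 0 := by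
  refine le_antisymm ?_ (vF_nonneg μ u)
  by_contra hlt
  push_neg at hlt
  have h2 : vF μ u ≤ vF μ u / 2 :=
    csInf_le ⟨0, fun y hy => hy.1⟩ ⟨by linarith, h _ (by linarith)⟩
  linarith

lemma psiF_eq_hF {μ : Measure ℝ} {t : ℝ} (h : vF μ t = 0) : PsiF μ t = HF μ t := by
  unfold PsiF HF
  congr 1
  refine integral_congr_ae (Eventually.of_forall fun y => ?_)
  rw [h]
  norm_num
  rw [sq, div_self_mul_self']

lemma isClosed_measSupp (μ : Measure ℝ) : IsClosed (MeasSupp μ) := by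
  rw [← isOpen_compl_iff, isOpen_iff_mem_nhds]
  intro x hx
  simp only [MeasSupp, mem_compl_iff, mem_setOf_eq, not_forall] at hx
  obtain ⟨U, hU, hU0⟩ := hx
  push_neg at hU0
  obtain ⟨V, hVU, hV, hxV⟩ := mem_nhds_iff.mp hU
  refine mem_nhds_iff.mpr ⟨V, fun z hz => ?_, hV, hxV⟩
  intro hzS
  exact hzS V (hV.mem_nhds hz) (measure_mono_null hVU hU0)

lemma measSupp_compl_null (μ : Measure ℝ) : μ (MeasSupp μ)ᶜ = 0 := by
  have h : ∀ x : ((MeasSupp μ)ᶜ : Set ℝ), ∃ U : Set ℝ, IsOpen U ∧ (x : ℝ) ∈ U ∧ μ U = 0 := by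
    rintro ⟨x, hx⟩
    simp only [MeasSupp, mem_compl_iff, mem_setOf_eq, not_forall] at hx
    obtain ⟨U, hU, hU0⟩ := hx
    push_neg at hU0
    obtain ⟨V, hVU, hV, hxV⟩ := mem_nhds_iff.mp hU
    exact ⟨V, hV, hxV, measure_mono_null hVU hU0⟩
  choose U hUo hxU hU0 using h
  obtain ⟨T, hTc, hTU⟩ := TopologicalSpace.isOpen_iUnion_countable U hUo
  have hsub : (MeasSupp μ)ᶜ ⊆ ⋃ i ∈ T, U i := by
    rw [hTU]
    exact fun x hx => mem_iUnion.mpr ⟨⟨x, hx⟩, hxU _⟩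
  exact measure_mono_null hsub ((measure_biUnion_null_iff hTc).mpr fun i _ => hU0 i)

lemma measSupp_nonempty (μ : Measure ℝ) [IsProbabilityMeasure μ] : (MeasSupp μ).Nonempty := by
  by_contra h
  rw [not_nonempty_iff_eq_empty] at h
  have := measSupp_compl_null μ
  rw [h, compl_empty, measure_univ] at this
  exact one_ne_zero this

-- integrand bounds under the a.e. separation hypothesis
lemma int_sq_kernel {μ : Measure ℝ} [IsProbabilityMeasure μ] {w ρ : ℝ} (hρ : 0 < ρ)
    (hae : ∀ᵐ y ∂μ, ρ ≤ |w - y|) : Integrable (fun y => ((w - y) ^ 2)⁻¹) μ := by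
  refine integrable_of_ae_bound (meas_aux2 w).aestronglyMeasurable (C := (ρ ^ 2)⁻¹) ?_
  filter_upwards [hae] with y hy
  have h1 : ρ ^ 2 ≤ (w - y) ^ 2 := by
    rw [← sq_abs (w - y)]; exact pow_le_pow_left₀ hρ.le hy 2
  have h2 : (0:ℝ) < (w - y) ^ 2 := lt_of_lt_of_le (by positivity) h1
  rw [abs_of_pos (by positivity)]
  exact le_trans (inv_anti₀ (by positivity) h1) le_rfl

lemma int_sqv_kernel {μ : Measure ℝ} [IsProbabilityMeasure μ] {w ρ : ℝ} (v : ℝ) (hρ : 0 < ρ)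
    (hae : ∀ᵐ y ∂μ, ρ ≤ |w - y|) : Integrable (fun y => ((w - y) ^ 2 + v ^ 2)⁻¹) μ := by
  refine integrable_of_ae_bound (meas_aux w v).aestronglyMeasurable (C := (ρ ^ 2)⁻¹) ?_
  filter_upwards [hae] with y hy
  have h1 : ρ ^ 2 ≤ (w - y) ^ 2 := by
    rw [← sq_abs (w - y)]; exact pow_le_pow_left₀ hρ.le hy 2
  have h2 : (0:ℝ) < (w - y) ^ 2 + v ^ 2 := by nlinarith [sq_nonneg v]
  rw [abs_of_pos (by positivity)]
  exact inv_anti₀ (by positivity) (by nlinarith [sq_nonneg v])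

lemma int_inv_kernel {μ : Measure ℝ} [IsProbabilityMeasure μ] {w ρ : ℝ} (hρ : 0 < ρ)
    (hae : ∀ᵐ y ∂μ, ρ ≤ |w - y|) : Integrable (fun y => (w - y)⁻¹) μ := by
  refine integrable_of_ae_bound ((measurable_const.sub measurable_id).inv).aestronglyMeasurable
    (C := ρ⁻¹) ?_
  filter_upwards [hae] with y hy
  rw [abs_inv]
  exact inv_anti₀ hρ hy

/-- Step B: if a point is outside `USet μ` and a.e. `ρ`-separated, then `∫ (w-y)⁻² ≤ 1`. -/
lemma gle1 {μ : Measure ℝ} [IsProbabilityMeasure μ] {w ρ : ℝ} (hρ : 0 < ρ)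
    (hae : ∀ᵐ y ∂μ, ρ ≤ |w - y|) (hnot : w ∉ USet μ) :
    ∫ y, ((w - y) ^ 2)⁻¹ ∂μ ≤ 1 := by
  have hv0 : vF μ w = 0 := le_antisymm (not_lt.mp hnot) (vF_nonneg μ w)
  have hsetne : {v : ℝ | 0 ≤ v ∧ ∫ x, ((w - x) ^ 2 + v ^ 2)⁻¹ ∂μ ≤ 1}.Nonempty := by
    refine ⟨1, zero_le_one, ?_⟩
    have hb : ∀ y : ℝ, ((w - y) ^ 2 + 1 ^ 2)⁻¹ ≤ 1 := by
      intro y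
      rw [inv_le_one₀ (by positivity)]
      nlinarith [sq_nonneg (w - y)]
    calc ∫ x, ((w - x) ^ 2 + 1 ^ 2)⁻¹ ∂μ ≤ ∫ _x, (1:ℝ) ∂μ :=
          integral_mono (int_sqv_kernel 1 hρ hae) (integrable_const 1) hb
      _ = 1 := by simp
  have hmem : ∀ v : ℝ, 0 < v → ∫ y, ((w - y) ^ 2 + v ^ 2)⁻¹ ∂μ ≤ 1 := by
    intro v hv
    have hlt : sInf {v : ℝ | 0 ≤ v ∧ ∫ x, ((w - x) ^ 2 + v ^ 2)⁻¹ ∂μ ≤ 1} < v := by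
      have : vF μ w < v := by rw [hv0]; exact hv
      exact this
    obtain ⟨v', hv'mem, hv'lt⟩ := exists_lt_of_csInf_lt hsetne hlt
    refine le_trans (integral_mono_ae (int_sqv_kernel v hρ hae) (int_sqv_kernel v' hρ hae) ?_) hv'mem.2
    filter_upwards [hae] with y hy
    have h1 : ρ ^ 2 ≤ (w - y) ^ 2 := by
      rw [← sq_abs (w - y)]; exact pow_le_pow_left₀ hρ.le hy 2
    apply inv_anti₀
    · nlinarith [sq_nonneg v']
    · nlinarith [pow_le_pow_left₀ hv'mem.1 hv'lt.le 2]
  -- dominated convergence as v → 0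
  have htend : Tendsto (fun n : ℕ => ∫ y, ((w - y) ^ 2 + (1 / (n + 1)) ^ 2)⁻¹ ∂μ) atTop
      (𝓝 (∫ y, ((w - y) ^ 2)⁻¹ ∂μ)) := by
    refine tendsto_integral_of_dominated_convergence (fun _ => (ρ ^ 2)⁻¹)
      (fun n => (meas_aux w _).aestronglyMeasurable) (integrable_const _) (fun n => ?_) ?_
    · filter_upwards [hae] with y hy
      have h1 : ρ ^ 2 ≤ (w - y) ^ 2 := by
        rw [← sq_abs (w - y)]; exact pow_le_pow_left₀ hρ.le hy 2
      rw [Real.norm_eq_abs, abs_of_pos (by positivity)]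
      exact inv_anti₀ (by positivity) (by nlinarith [sq_nonneg (1 / ((n:ℝ) + 1))])
    · filter_upwards [hae] with y hy
      have h1 : ρ ^ 2 ≤ (w - y) ^ 2 := by
        rw [← sq_abs (w - y)]; exact pow_le_pow_left₀ hρ.le hy 2
      have hne : (w - y) ^ 2 ≠ 0 := (lt_of_lt_of_le (by positivity : (0:ℝ) < ρ ^ 2) h1).ne'
      have h0 : Tendsto (fun n : ℕ => (1 / ((n:ℝ) + 1)) ^ 2) atTop (𝓝 0) := by
        simpa using (tendsto_one_div_add_atTop_nhds_zero_nat :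
          Tendsto (fun n : ℕ => 1 / ((n : ℝ) + 1)) atTop (𝓝 0)).pow 2
      have := ((tendsto_const_nhds (x := (w - y) ^ 2) (f := atTop (α := ℕ))).add h0).inv₀
        (by simpa using hne)
      simpa using this
  exact le_of_tendsto htend (Eventually.of_forall fun n => hmem _ (by positivity))

lemma convex_ineq {a h : ℝ} (hh : 0 < h) (hah : 2 * h ≤ |a|) :
    2 * ((a) ^ 2)⁻¹ < ((a - h) ^ 2)⁻¹ + ((a + h) ^ 2)⁻¹ := by
  have hha : h < |a| := lt_of_lt_of_le (by linarith) hah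
  have ha0 : a ≠ 0 := fun h' => by simp [h'] at hha; linarith
  have h1 : a - h ≠ 0 := by
    intro h'
    have : a = h := by linarith
    rw [this, abs_of_pos hh] at hha; linarith
  have h2 : a + h ≠ 0 := by
    intro h'
    have : a = -h := by linarith
    rw [this, abs_neg, abs_of_pos hh] at hha; linarith
  have hsq : (2 * h) ^ 2 ≤ a ^ 2 := by
    rw [← sq_abs a]
    exact pow_le_pow_left₀ (by positivity) hah 2
  have ha2 : (0:ℝ) < a ^ 2 := lt_of_le_of_ne (sq_nonneg a) (Ne.symm (pow_ne_zero 2 ha0))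
  have hb2 : (0:ℝ) < (a - h) ^ 2 := lt_of_le_of_ne (sq_nonneg _) (Ne.symm (pow_ne_zero 2 h1))
  have hc2 : (0:ℝ) < (a + h) ^ 2 := lt_of_le_of_ne (sq_nonneg _) (Ne.symm (pow_ne_zero 2 h2))
  rw [← sub_pos]
  have expand : ((a - h) ^ 2)⁻¹ + ((a + h) ^ 2)⁻¹ - 2 * ((a) ^ 2)⁻¹
      = 2 * h ^ 2 * (3 * a ^ 2 - h ^ 2) / (a ^ 2 * ((a - h) ^ 2 * (a + h) ^ 2)) := by
    field_simp
    ring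
  rw [expand]
  apply div_pos
  · nlinarith [hsq, mul_pos hh hh]
  · positivity

lemma sq_kernel_lip_aux {A B ρ : ℝ} (hρ : 0 < ρ) (hA : ρ ≤ A) (hB : ρ ≤ B) (hAB : A ≤ B) :
    |(A ^ 2)⁻¹ - (B ^ 2)⁻¹| ≤ 2 / ρ ^ 3 * |A - B| := by
  have hA0 : 0 < A := lt_of_lt_of_le hρ hA
  have hB0 : 0 < B := lt_of_lt_of_le hρ hB
  have hle : (B ^ 2)⁻¹ ≤ (A ^ 2)⁻¹ := by
    apply inv_anti₀ (by positivity)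
    exact pow_le_pow_left₀ hA0.le hAB 2
  rw [abs_of_nonneg (sub_nonneg.mpr hle), abs_of_nonpos (by linarith), neg_sub]
  have expand : (A ^ 2)⁻¹ - (B ^ 2)⁻¹ = (B ^ 2 - A ^ 2) / (A ^ 2 * B ^ 2) := by
    field_simp
  have erw : 2 / ρ ^ 3 * (B - A) = 2 * (B - A) / ρ ^ 3 := by ring
  rw [expand, erw, div_le_div_iff₀ (by positivity) (by positivity)]
  have q1 : ρ * ρ ≤ A * B := mul_le_mul hA hB hρ.le hA0.le
  have q2 : ρ * ρ * ρ ≤ A * B * B := mul_le_mul q1 hB hρ.le (by positivity)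
  have q3 : ρ * ρ * ρ ≤ A * B * A := by nlinarith [mul_le_mul q1 hA hρ.le (by positivity : (0:ℝ) ≤ A * B)]
  have e1 : A * ρ ^ 3 ≤ A ^ 2 * B ^ 2 := by nlinarith [q2, hA0.le]
  have e2 : B * ρ ^ 3 ≤ A ^ 2 * B ^ 2 := by nlinarith [q2, hB0.le]
  have e3 : (A + B) * ρ ^ 3 ≤ 2 * (A ^ 2 * B ^ 2) := by linarith
  nlinarith [mul_le_mul_of_nonneg_left e3 (sub_nonneg.mpr hAB)]

lemma sq_kernel_lip {a b ρ : ℝ} (hρ : 0 < ρ) (ha : ρ ≤ |a|) (hb : ρ ≤ |b|) :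
    |(a ^ 2)⁻¹ - (b ^ 2)⁻¹| ≤ 2 / ρ ^ 3 * |a - b| := by
  have key : |(|a| ^ 2)⁻¹ - (|b| ^ 2)⁻¹| ≤ 2 / ρ ^ 3 * |(|a| - |b|)| := by
    rcases le_total |a| |b| with hab | hab
    · exact sq_kernel_lip_aux hρ ha hb hab
    · rw [abs_sub_comm, abs_sub_comm |a| |b|]
      exact sq_kernel_lip_aux hρ hb ha hab
  rw [sq_abs, sq_abs] at key
  refine key.trans ?_
  have := abs_abs_sub_abs_le_abs_sub a b
  have h23 : (0:ℝ) ≤ 2 / ρ ^ 3 := by positivity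
  exact mul_le_mul_of_nonneg_left this h23

lemma inv_kernel_lip {a b ρ : ℝ} (hρ : 0 < ρ) (ha : ρ ≤ |a|) (hb : ρ ≤ |b|) :
    |a⁻¹ - b⁻¹| ≤ (ρ ^ 2)⁻¹ * |a - b| := by
  have ha0 : a ≠ 0 := fun h => by rw [h, abs_zero] at ha; linarith
  have hb0 : b ≠ 0 := fun h => by rw [h, abs_zero] at hb; linarith
  have key : a⁻¹ - b⁻¹ = (b - a) / (a * b) := by field_simp
  rw [key, abs_div, abs_mul, div_le_iff₀ (by positivity : (0:ℝ) < |a| * |b|)]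
  have h1 : ρ ^ 2 ≤ |a| * |b| := by nlinarith [mul_le_mul ha hb hρ.le (abs_nonneg a)]
  have h2 : |b - a| = |a - b| := abs_sub_comm b a
  rw [h2]
  have h3 : 1 ≤ (ρ ^ 2)⁻¹ * (|a| * |b|) := by
    rw [inv_mul_eq_div, le_div_iff₀ (by positivity : (0:ℝ) < ρ ^ 2)]
    linarith
  calc |a - b| = |a - b| * 1 := (mul_one _).symm
    _ ≤ |a - b| * ((ρ ^ 2)⁻¹ * (|a| * |b|)) := mul_le_mul_of_nonneg_left h3 (abs_nonneg _)
    _ = (ρ ^ 2)⁻¹ * |a - b| * (|a| * |b|) := by ring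

/-- strict convexity: strict bound at the midpoint. -/
lemma gstrict {μ : Measure ℝ} [IsProbabilityMeasure μ] {x d h : ℝ} (hd : 0 < d) (hh : 0 < h)
    (hhd : h ≤ d / 2) (hae : ∀ᵐ y ∂μ, d ≤ |x - y|)
    (h1 : ∫ y, ((x - h - y) ^ 2)⁻¹ ∂μ ≤ 1) (h2 : ∫ y, ((x + h - y) ^ 2)⁻¹ ∂μ ≤ 1) :
    ∫ y, ((x - y) ^ 2)⁻¹ ∂μ < 1 := by
  have hae1 : ∀ᵐ y ∂μ, d / 2 ≤ |x - h - y| := by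
    filter_upwards [hae] with y hy
    have t1 : |x - y| - |h| ≤ |(x - y) - h| := abs_sub_abs_le_abs_sub _ _
    have e : (x - y) - h = x - h - y := by ring
    rw [e, abs_of_pos hh] at t1
    linarith
  have hae2 : ∀ᵐ y ∂μ, d / 2 ≤ |x + h - y| := by
    filter_upwards [hae] with y hy
    have t1 : |x - y| - |(-h)| ≤ |(x - y) - (-h)| := abs_sub_abs_le_abs_sub _ _
    have e : (x - y) - (-h) = x + h - y := by ring
    rw [e, abs_neg, abs_of_pos hh] at t1
    linarith
  have hd2 : (0:ℝ) < d / 2 := by linarith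
  have intc : Integrable (fun y => ((x - y) ^ 2)⁻¹) μ := int_sq_kernel hd hae
  have int1 : Integrable (fun y => ((x - h - y) ^ 2)⁻¹) μ := int_sq_kernel hd2 hae1
  have int2 : Integrable (fun y => ((x + h - y) ^ 2)⁻¹) μ := int_sq_kernel hd2 hae2
  set Φ : ℝ → ℝ := fun y => (((x - h - y) ^ 2)⁻¹ + ((x + h - y) ^ 2)⁻¹) / 2 - ((x - y) ^ 2)⁻¹
    with hΦdef
  have hΦint : Integrable Φ μ := ((int1.add int2).div_const 2).sub intc
  have hΦpos : ∀ᵐ y ∂μ, 0 < Φ y := by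
    filter_upwards [hae] with y hy
    have key := convex_ineq (a := x - y) hh (by linarith)
    have e1 : (x - y) - h = x - h - y := by ring
    have e2 : (x - y) + h = x + h - y := by ring
    rw [e1, e2] at key
    simp only [hΦdef]
    linarith
  have hpos : 0 < ∫ y, Φ y ∂μ := by
    rw [integral_pos_iff_support_of_nonneg_ae
      (by filter_upwards [hΦpos] with y hy; exact hy.le) hΦint]
    have hcompl : μ (Function.support Φ)ᶜ = 0 := by
      have hmem : ∀ᵐ y ∂μ, y ∈ Function.support Φ := by
        filter_upwards [hΦpos] with y hy
        exact Function.mem_support.mpr hy.ne'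
      rw [ae_iff] at hmem
      have hset : (Function.support Φ)ᶜ = {a | ¬ a ∈ Function.support Φ} := by
        ext a; simp
      rw [hset]
      exact hmem
    by_contra h0
    push_neg at h0
    have h00 : μ (Function.support Φ) = 0 := le_antisymm h0 zero_le
    have := measure_union_le (μ := μ) (Function.support Φ) (Function.support Φ)ᶜ
    rw [union_compl_self, h00, hcompl, measure_univ] at this
    simp at this
  have hsplit : ∫ y, Φ y ∂μ
      = (∫ y, ((x - h - y) ^ 2)⁻¹ ∂μ + ∫ y, ((x + h - y) ^ 2)⁻¹ ∂μ) / 2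
        - ∫ y, ((x - y) ^ 2)⁻¹ ∂μ := by
    have ha : Integrable (fun y => (((x - h - y) ^ 2)⁻¹ + ((x + h - y) ^ 2)⁻¹) / 2) μ := by
      have := (int1.add int2).div_const (2:ℝ)
      simpa using this
    calc ∫ y, Φ y ∂μ
        = (∫ y, (((x - h - y) ^ 2)⁻¹ + ((x + h - y) ^ 2)⁻¹) / 2 ∂μ)
          - ∫ y, ((x - y) ^ 2)⁻¹ ∂μ := integral_sub ha intc
      _ = (∫ y, (((x - h - y) ^ 2)⁻¹ + ((x + h - y) ^ 2)⁻¹) ∂μ) / 2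
          - ∫ y, ((x - y) ^ 2)⁻¹ ∂μ := by rw [integral_div]
      _ = (∫ y, ((x - h - y) ^ 2)⁻¹ ∂μ + ∫ y, ((x + h - y) ^ 2)⁻¹ ∂μ) / 2
          - ∫ y, ((x - y) ^ 2)⁻¹ ∂μ := by rw [integral_add int1 int2]
  rw [hsplit] at hpos
  linarith

/-- net argument: pointwise convergence + uniform Lipschitz ⇒ uniform convergence on compacts. -/
lemma uc {K : Set ℝ} (hK : IsCompact K) {L : ℝ} (hL : 0 ≤ L)
    {G : ℕ → ℝ → ℝ} {g : ℝ → ℝ}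
    (hlip : ∀ᶠ N in atTop, ∀ x ∈ K, ∀ x' ∈ K, |G N x - G N x'| ≤ L * |x - x'|)
    (hlipg : ∀ x ∈ K, ∀ x' ∈ K, |g x - g x'| ≤ L * |x - x'|)
    (hpt : ∀ x ∈ K, Tendsto (fun N => G N x) atTop (𝓝 (g x))) :
    TendstoUniformlyOn G g atTop K := by
  rcases K.eq_empty_or_nonempty with rfl | hne
  · exact tendstoUniformlyOn_empty
  rw [Metric.tendstoUniformlyOn_iff]
  intro ε hε
  have hρ : 0 < ε / (3 * (L + 1)) := by positivity
  set ρ := ε / (3 * (L + 1)) with hρdef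
  have hcov : K ⊆ ⋃ t : K, Metric.ball (t : ℝ) ρ := fun x hx =>
    mem_iUnion.mpr ⟨⟨x, hx⟩, Metric.mem_ball_self hρ⟩
  obtain ⟨T, hT⟩ := hK.elim_finite_subcover (fun t : K => Metric.ball (t : ℝ) ρ)
    (fun _ => Metric.isOpen_ball) hcov
  have hnet : ∀ᶠ N in atTop, ∀ t ∈ T, dist (G N (t : ℝ)) (g (t : ℝ)) < ε / 3 := by
    rw [Filter.eventually_all_finset]
    intro t _
    exact (Metric.tendsto_nhds.mp (hpt (t : ℝ) t.2)) (ε / 3) (by positivity)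
  filter_upwards [hlip, hnet] with N hLip hNet x hx
  obtain ⟨t, htT, hxt⟩ : ∃ t ∈ T, x ∈ Metric.ball (t : ℝ) ρ := by
    have := hT hx
    simpa using this
  have hdxt : |x - (t : ℝ)| < ρ := by rwa [Metric.mem_ball, Real.dist_eq] at hxt
  have hLρ : L * |x - (t : ℝ)| ≤ ε / 3 := by
    have step1 : L * |x - (t : ℝ)| ≤ L * ρ := mul_le_mul_of_nonneg_left hdxt.le hL
    have step2 : L * ρ ≤ (L + 1) * ρ := by nlinarith [hρ]
    have step3 : (L + 1) * ρ = ε / 3 := by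
      rw [hρdef]; field_simp
    linarith
  rw [Real.dist_eq]
  have tri1 : |g x - G N x| ≤ |g x - G N (t : ℝ)| + |G N (t : ℝ) - G N x| := abs_sub_le _ _ _
  have tri2 : |g x - G N (t : ℝ)| ≤ |g x - g (t : ℝ)| + |g (t : ℝ) - G N (t : ℝ)| :=
    abs_sub_le _ _ _
  have e1 : |g x - g (t : ℝ)| ≤ ε / 3 := (hlipg x hx (t : ℝ) t.2).trans hLρ
  have e2 : |g (t : ℝ) - G N (t : ℝ)| < ε / 3 := by
    have := hNet t htT
    rw [Real.dist_eq, abs_sub_comm] at this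
    exact this
  have e3 : |G N (t : ℝ) - G N x| ≤ ε / 3 := by
    have := hLip (t : ℝ) t.2 x hx
    rw [abs_sub_comm x (t : ℝ)] at hLρ
    exact this.trans hLρ
  linarith

lemma sep_sq {ρ t : ℝ} (h0 : 0 ≤ ρ) (h : ρ ≤ |t|) : ρ ^ 2 ≤ t ^ 2 := by
  rw [← sq_abs t]; exact pow_le_pow_left₀ h0 h 2


/-- on a compact set `K ⊆ ℝ \ (closure(U_ν) ∪ Θ)`, for all large `N`,
`K ⊆ ℝ \ U_N` and `Ψ_N = H_N` on `K`, and `Ψ_N → Ψ_ν = H_ν` uniformly on `K`. -/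
theorem stmt19
    (ν : Measure ℝ) [IsProbabilityMeasure ν] (hcomp : IsCompact (MeasSupp ν))
    (J r : ℕ) (θ : Fin J → ℝ) (k : Fin J → ℕ)
    (hθanti : StrictAnti θ) (hθsupp : ∀ j, θ j ∉ MeasSupp ν)
    (hkpos : ∀ j, 0 < k j) (hkr : ∑ j, k j = r)
    (β : ℕ → ℕ → ℝ) (μA : ℕ → Measure ℝ)
    (hprob : ∀ N, IsProbabilityMeasure (μA N))
    (hdecomp : ∀ N, r ≤ N → μA N = (N : ℝ≥0∞)⁻¹ •
      ((∑ j, (k j : ℝ≥0∞) • Measure.dirac (θ j)) +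
        ∑ i ∈ Finset.range (N - r), Measure.dirac (β N i)))
    (hweak : ∀ f : BoundedContinuousFunction ℝ ℝ,
      Tendsto (fun N => ∫ x, f x ∂(μA N)) atTop (𝓝 (∫ x, f x ∂ν)))
    (hβ : ∀ ε > 0, ∀ᶠ N in atTop, ∀ i ∈ Finset.range (N - r),
      Metric.infDist (β N i) (MeasSupp ν) < ε)
    (hsuppU : MeasSupp ν ⊆ USet ν)
    (K : Set ℝ) (hK : IsCompact K) (hKs : K ⊆ (closure (USet ν) ∪ Set.range θ)ᶜ) :
    (∀ x ∈ K, PsiF ν x = HF ν x) ∧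
    (∀ᶠ N in atTop, ∀ x ∈ K, x ∉ USet (μA N) ∧ PsiF (μA N) x = HF (μA N) x) ∧
    TendstoUniformlyOn (fun N x => PsiF (μA N) x) (PsiF ν) atTop K := by
    classical
  have hSnull := measSupp_compl_null ν
  have hSne := measSupp_nonempty ν
  have hpart1 : ∀ x ∈ K, PsiF ν x = HF ν x := by
    intro x hx
    have hxU : x ∉ USet ν := fun hU => hKs hx (Or.inl (subset_closure hU))
    exact psiF_eq_hF (le_antisymm (not_lt.mp hxU) (vF_nonneg ν x))
  rcases K.eq_empty_or_nonempty with rfl | hKne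
  · exact ⟨hpart1, Eventually.of_forall fun N => by simp, tendstoUniformlyOn_empty⟩
  -- separation constant
  set C : Set ℝ := closure (USet ν) ∪ Set.range θ with hCdef
  have hCclosed : IsClosed C := isClosed_closure.union (Set.finite_range θ).isClosed
  have hSsubC : MeasSupp ν ⊆ C := fun s hs => Or.inl (subset_closure (hsuppU hs))
  have hCne : C.Nonempty := ⟨hSne.choose, hSsubC hSne.choose_spec⟩
  obtain ⟨x₁, hx₁K, hx₁min⟩ := hK.exists_isMinOn hKne
    (Metric.continuous_infDist_pt C).continuousOn
  set d := Metric.infDist x₁ C with hddef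
  have hd : 0 < d := (hCclosed.notMem_iff_infDist_pos hCne).mp (hKs hx₁K)
  have hsep : ∀ x ∈ K, ∀ z ∈ C, d ≤ |x - z| := by
    intro x hx z hz
    calc d ≤ Metric.infDist x C := hx₁min hx
      _ ≤ dist x z := Metric.infDist_le_dist_of_mem hz
      _ = |x - z| := Real.dist_eq x z
  set ρ := d / 2 with hρdef
  have hρ : 0 < ρ := by rw [hρdef]; linarith
  have hρd : ρ ≤ d := by rw [hρdef]; linarith
  -- a.e. separation for ν
  have hae0 : ∀ᵐ y ∂ν, ∀ x ∈ K, d ≤ |x - y| := by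
    have hmem : ∀ᵐ y ∂ν, y ∈ MeasSupp ν := by
      rw [ae_iff]
      have hset : {a : ℝ | ¬ a ∈ MeasSupp ν} = (MeasSupp ν)ᶜ := rfl
      rw [hset]; exact hSnull
    filter_upwards [hmem] with y hy x hx
    exact hsep x hx y (hSsubC hy)
  -- eventual a.e. separation for μA N
  have haeN : ∀ᶠ N in atTop, ∀ᵐ y ∂(μA N), ∀ x ∈ K, ρ ≤ |x - y| := by
    filter_upwards [hβ ρ hρ, eventually_ge_atTop r] with N hβN hrN
    set Bad : Set ℝ := ⋃ x ∈ K, Metric.ball x ρ with hBaddef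
    have hBadM : MeasurableSet Bad :=
      (isOpen_biUnion fun _ _ => Metric.isOpen_ball).measurableSet
    have hθBad : ∀ j : Fin J, θ j ∉ Bad := by
      intro j hmem
      simp only [hBaddef, mem_iUnion] at hmem
      obtain ⟨x, hx, hball⟩ := hmem
      rw [Metric.mem_ball, Real.dist_eq, abs_sub_comm] at hball
      have := hsep x hx (θ j) (Or.inr ⟨j, rfl⟩)
      rw [hρdef] at hball
      linarith
    have hβBad : ∀ i ∈ Finset.range (N - r), β N i ∉ Bad := by
      intro i hi hmem
      obtain ⟨s, hsS, hds⟩ := (Metric.infDist_lt_iff hSne).mp (hβN i hi)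
      simp only [hBaddef, mem_iUnion] at hmem
      obtain ⟨x, hx, hball⟩ := hmem
      rw [Metric.mem_ball, Real.dist_eq] at hball
      rw [Real.dist_eq] at hds
      have h1 := hsep x hx s (hSsubC hsS)
      have h2 : |x - s| ≤ |x - (β N i)| + |(β N i) - s| := abs_sub_le _ _ _
      rw [abs_sub_comm] at hball
      rw [hρdef] at hball hds
      linarith
    have hμBad : μA N Bad = 0 := by
      rw [hdecomp N hrN, Measure.smul_apply, Measure.add_apply,
        Measure.finset_sum_apply, Measure.finset_sum_apply,
        Finset.sum_eq_zero (fun j _ => by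
          rw [Measure.smul_apply, Measure.dirac_apply' _ hBadM,
            indicator_of_notMem (hθBad j)]
          simp),
        Finset.sum_eq_zero (fun i hi => by
          rw [Measure.dirac_apply' _ hBadM, indicator_of_notMem (hβBad i hi)])]
      simp
    rw [ae_iff]
    refine measure_mono_null (fun y hy => ?_) hμBad
    simp only [mem_setOf_eq] at hy
    push_neg at hy
    obtain ⟨x, hx, hlt⟩ := hy
    exact mem_biUnion hx (Metric.mem_ball.mpr (by rw [Real.dist_eq, abs_sub_comm]; exact hlt))
  -- pointwise convergence of the squared kernel integrals
  have hptsq : ∀ x ∈ K, Tendsto (fun N => ∫ y, ((x - y) ^ 2)⁻¹ ∂(μA N)) atTop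
      (𝓝 (∫ y, ((x - y) ^ 2)⁻¹ ∂ν)) := by
    intro x hx
    have hMpos : ∀ y : ℝ, (0:ℝ) < max ((x - y) ^ 2) (ρ ^ 2) := fun y =>
      lt_of_lt_of_le (by positivity) (le_max_right _ _)
    have hcont : Continuous (fun y : ℝ => (max ((x - y) ^ 2) (ρ ^ 2))⁻¹) := by
      apply Continuous.inv₀
      · exact ((continuous_const.sub continuous_id).pow 2).max continuous_const
      · exact fun y => (hMpos y).ne'
    have hbd : ∀ y : ℝ, ‖(max ((x - y) ^ 2) (ρ ^ 2))⁻¹‖ ≤ (ρ ^ 2)⁻¹ := by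
      intro y
      rw [Real.norm_eq_abs, abs_of_pos (inv_pos.mpr (hMpos y))]
      exact inv_anti₀ (by positivity) (le_max_right _ _)
    set f := BoundedContinuousFunction.ofNormedAddCommGroup _ hcont ((ρ ^ 2)⁻¹) hbd with hfdef
    have hwf := hweak f
    have hν : ∫ y, f y ∂ν = ∫ y, ((x - y) ^ 2)⁻¹ ∂ν := by
      refine integral_congr_ae ?_
      filter_upwards [hae0] with y hy
      simp only [hfdef, BoundedContinuousFunction.coe_ofNormedAddCommGroup]
      rw [max_eq_left (sep_sq hρ.le ((hρd.trans (hy x hx))))]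
    have hevN : (fun N => ∫ y, f y ∂(μA N)) =ᶠ[atTop]
        (fun N => ∫ y, ((x - y) ^ 2)⁻¹ ∂(μA N)) := by
      filter_upwards [haeN] with N hN
      refine integral_congr_ae ?_
      filter_upwards [hN] with y hy
      simp only [hfdef, BoundedContinuousFunction.coe_ofNormedAddCommGroup]
      rw [max_eq_left (sep_sq hρ.le (hy x hx))]
    rw [hν] at hwf
    exact hwf.congr' hevN
  -- pointwise convergence of the inverse kernel integrals
  have hptinv : ∀ x ∈ K, Tendsto (fun N => ∫ y, (x - y)⁻¹ ∂(μA N)) atTop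
      (𝓝 (∫ y, (x - y)⁻¹ ∂ν)) := by
    intro x hx
    have hMpos : ∀ y : ℝ, (0:ℝ) < max ((x - y) ^ 2) (ρ ^ 2) := fun y =>
      lt_of_lt_of_le (by positivity) (le_max_right _ _)
    have hcont : Continuous (fun y : ℝ => (x - y) * (max ((x - y) ^ 2) (ρ ^ 2))⁻¹) := by
      apply Continuous.mul (continuous_const.sub continuous_id)
      apply Continuous.inv₀
      · exact ((continuous_const.sub continuous_id).pow 2).max continuous_const
      · exact fun y => (hMpos y).ne'
    have hbd : ∀ y : ℝ, ‖(x - y) * (max ((x - y) ^ 2) (ρ ^ 2))⁻¹‖ ≤ ρ⁻¹ := by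
      intro y
      by_cases h0 : x - y = 0
      · rw [h0]
        simp only [zero_mul, norm_zero]
        positivity
      · have habs : 0 < |x - y| := abs_pos.mpr h0
        have hM : ρ * |x - y| ≤ max ((x - y) ^ 2) (ρ ^ 2) := by
          rcases le_total |x - y| ρ with hc | hc
          · refine le_trans ?_ (le_max_right _ _)
            calc ρ * |x - y| ≤ ρ * ρ := mul_le_mul_of_nonneg_left hc hρ.le
              _ = ρ ^ 2 := by ring
          · refine le_trans ?_ (le_max_left _ _)
            calc ρ * |x - y| ≤ |x - y| * |x - y| := mul_le_mul_of_nonneg_right hc (abs_nonneg _)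
              _ = (x - y) ^ 2 := by rw [abs_mul_abs_self]; ring
        rw [Real.norm_eq_abs, abs_mul, abs_inv, abs_of_pos (hMpos y)]
        calc |x - y| * (max ((x - y) ^ 2) (ρ ^ 2))⁻¹
            ≤ |x - y| * (ρ * |x - y|)⁻¹ :=
              mul_le_mul_of_nonneg_left (inv_anti₀ (by positivity) hM) (abs_nonneg _)
          _ = ρ⁻¹ := by
              rw [mul_inv, ← mul_assoc, mul_comm |x - y| ρ⁻¹, mul_assoc,
                mul_inv_cancel₀ habs.ne', mul_one]
    set f := BoundedContinuousFunction.ofNormedAddCommGroup _ hcont (ρ⁻¹) hbd with hfdef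
    have hwf := hweak f
    have hkey : ∀ y : ℝ, ρ ≤ |x - y| → (x - y) * (max ((x - y) ^ 2) (ρ ^ 2))⁻¹ = (x - y)⁻¹ := by
      intro y hy
      have hne : x - y ≠ 0 := by
        intro h0; rw [h0, abs_zero] at hy; linarith
      rw [max_eq_left (sep_sq hρ.le hy), sq, mul_inv, ← mul_assoc,
        mul_inv_cancel₀ hne, one_mul]
    have hν : ∫ y, f y ∂ν = ∫ y, (x - y)⁻¹ ∂ν := by
      refine integral_congr_ae ?_
      filter_upwards [hae0] with y hy
      simp only [hfdef, BoundedContinuousFunction.coe_ofNormedAddCommGroup]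
      exact hkey y (hρd.trans (hy x hx))
    have hevN : (fun N => ∫ y, f y ∂(μA N)) =ᶠ[atTop]
        (fun N => ∫ y, (x - y)⁻¹ ∂(μA N)) := by
      filter_upwards [haeN] with N hN
      refine integral_congr_ae ?_
      filter_upwards [hN] with y hy
      simp only [hfdef, BoundedContinuousFunction.coe_ofNormedAddCommGroup]
      exact hkey y (hy x hx)
    rw [hν] at hwf
    exact hwf.congr' hevN
  -- Lipschitz bounds
  have hlipν_sq : ∀ x ∈ K, ∀ x' ∈ K,
      |(∫ y, ((x - y) ^ 2)⁻¹ ∂ν) - ∫ y, ((x' - y) ^ 2)⁻¹ ∂ν| ≤ 2 / ρ ^ 3 * |x - x'| := by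
    intro x hx x' hx'
    refine integral_abs_sub_le
      (int_sq_kernel hρ (hae0.mono fun y hy => hρd.trans (hy x hx)))
      (int_sq_kernel hρ (hae0.mono fun y hy => hρd.trans (hy x' hx'))) ?_
    filter_upwards [hae0] with y hy
    have := sq_kernel_lip hρ (hρd.trans (hy x hx)) (hρd.trans (hy x' hx'))
    have e : (x - y) - (x' - y) = x - x' := by ring
    rwa [e] at this
  have hlipN_sq : ∀ᶠ N in atTop, ∀ x ∈ K, ∀ x' ∈ K,
      |(∫ y, ((x - y) ^ 2)⁻¹ ∂(μA N)) - ∫ y, ((x' - y) ^ 2)⁻¹ ∂(μA N)|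
        ≤ 2 / ρ ^ 3 * |x - x'| := by
    filter_upwards [haeN] with N hN x hx x' hx'
    haveI := hprob N
    refine integral_abs_sub_le (int_sq_kernel hρ (hN.mono fun y hy => hy x hx))
      (int_sq_kernel hρ (hN.mono fun y hy => hy x' hx')) ?_
    filter_upwards [hN] with y hy
    have := sq_kernel_lip hρ (hy x hx) (hy x' hx')
    have e : (x - y) - (x' - y) = x - x' := by ring
    rwa [e] at this
  have hlipν_inv : ∀ x ∈ K, ∀ x' ∈ K,
      |(∫ y, (x - y)⁻¹ ∂ν) - ∫ y, (x' - y)⁻¹ ∂ν| ≤ (ρ ^ 2)⁻¹ * |x - x'| := by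
    intro x hx x' hx'
    refine integral_abs_sub_le
      (int_inv_kernel hρ (hae0.mono fun y hy => hρd.trans (hy x hx)))
      (int_inv_kernel hρ (hae0.mono fun y hy => hρd.trans (hy x' hx'))) ?_
    filter_upwards [hae0] with y hy
    have := inv_kernel_lip hρ (hρd.trans (hy x hx)) (hρd.trans (hy x' hx'))
    have e : (x - y) - (x' - y) = x - x' := by ring
    rwa [e] at this
  have hlipN_inv : ∀ᶠ N in atTop, ∀ x ∈ K, ∀ x' ∈ K,
      |(∫ y, (x - y)⁻¹ ∂(μA N)) - ∫ y, (x' - y)⁻¹ ∂(μA N)| ≤ (ρ ^ 2)⁻¹ * |x - x'| := by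
    filter_upwards [haeN] with N hN x hx x' hx'
    haveI := hprob N
    refine integral_abs_sub_le (int_inv_kernel hρ (hN.mono fun y hy => hy x hx))
      (int_inv_kernel hρ (hN.mono fun y hy => hy x' hx')) ?_
    filter_upwards [hN] with y hy
    have := inv_kernel_lip hρ (hy x hx) (hy x' hx')
    have e : (x - y) - (x' - y) = x - x' := by ring
    rwa [e] at this
  -- uniform convergence of the two kernel integrals
  have hgUC : TendstoUniformlyOn (fun N x => ∫ y, ((x - y) ^ 2)⁻¹ ∂(μA N))
      (fun x => ∫ y, ((x - y) ^ 2)⁻¹ ∂ν) atTop K :=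
    uc hK (by positivity) hlipN_sq hlipν_sq hptsq
  have hHUC : TendstoUniformlyOn (fun N x => ∫ y, (x - y)⁻¹ ∂(μA N))
      (fun x => ∫ y, (x - y)⁻¹ ∂ν) atTop K :=
    uc hK (by positivity) hlipN_inv hlipν_inv hptinv
  -- strict bound at the maximum point
  have hgcont : ContinuousOn (fun x => ∫ y, ((x - y) ^ 2)⁻¹ ∂ν) K := by
    have hlip : LipschitzOnWith (Real.toNNReal (2 / ρ ^ 3))
        (fun x => ∫ y, ((x - y) ^ 2)⁻¹ ∂ν) K := by
      rw [lipschitzOnWith_iff_dist_le_mul]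
      intro a ha b hb
      rw [Real.dist_eq, Real.dist_eq, Real.coe_toNNReal _ (by positivity)]
      exact hlipν_sq a ha b hb
    exact hlip.continuousOn
  obtain ⟨xM, hxM, hmax⟩ := hK.exists_isMaxOn hKne hgcont
  have hxMC : xM ∉ closure (USet ν) := fun h => hKs hxM (Or.inl h)
  obtain ⟨ε₀, hε₀, hball⟩ := Metric.isOpen_iff.mp
    (isClosed_closure (s := USet ν)).isOpen_compl xM hxMC
  set h0 : ℝ := min (ε₀ / 2) ρ with hh0def
  have hh0 : 0 < h0 := lt_min (by linarith) hρ
  have hh0ρ : h0 ≤ ρ := min_le_right _ _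
  have hnotU : ∀ s : ℝ, |s - xM| ≤ h0 → s ∉ USet ν := by
    intro s hs hU
    have hsball : s ∈ Metric.ball xM ε₀ := by
      rw [Metric.mem_ball, Real.dist_eq]
      have : h0 ≤ ε₀ / 2 := min_le_left _ _
      linarith [hs]
    exact hball hsball (subset_closure hU)
  have haeshift : ∀ s : ℝ, |s - xM| ≤ h0 → ∀ᵐ y ∂ν, ρ ≤ |s - y| := by
    intro s hs
    filter_upwards [hae0] with y hy
    have h1 : |xM - y| ≤ |xM - s| + |s - y| := abs_sub_le _ _ _
    rw [abs_sub_comm xM s] at h1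
    have h2 := hy xM hxM
    rw [hρdef]
    rw [hρdef] at hh0ρ
    linarith [hs]
  have haeM : ∀ᵐ y ∂ν, d ≤ |xM - y| := hae0.mono fun y hy => hy xM hxM
  have hc1 : ∫ y, ((xM - h0 - y) ^ 2)⁻¹ ∂ν ≤ 1 :=
    gle1 hρ (haeshift (xM - h0) (by rw [show xM - h0 - xM = -h0 by ring, abs_neg,
      abs_of_pos hh0])) (hnotU _ (by rw [show xM - h0 - xM = -h0 by ring, abs_neg,
      abs_of_pos hh0]))
  have hc2 : ∫ y, ((xM + h0 - y) ^ 2)⁻¹ ∂ν ≤ 1 :=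
    gle1 hρ (haeshift (xM + h0) (by rw [show xM + h0 - xM = h0 by ring,
      abs_of_pos hh0])) (hnotU _ (by rw [show xM + h0 - xM = h0 by ring,
      abs_of_pos hh0]))
  have hlt1 : ∫ y, ((xM - y) ^ 2)⁻¹ ∂ν < 1 :=
    gstrict hd hh0 (by rw [hρdef] at hh0ρ; linarith) haeM hc1 hc2
  set c := ∫ y, ((xM - y) ^ 2)⁻¹ ∂ν with hcdef
  -- eventual bound g_N ≤ 1 on K
  have hgb : ∀ᶠ N in atTop, ∀ x ∈ K, ∫ y, ((x - y) ^ 2)⁻¹ ∂(μA N) ≤ 1 := by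
    have hUC := Metric.tendstoUniformlyOn_iff.mp hgUC (1 - c) (by linarith)
    filter_upwards [hUC] with N hN x hx
    have hdist := hN x hx
    rw [Real.dist_eq] at hdist
    have hb : ∫ y, ((x - y) ^ 2)⁻¹ ∂ν ≤ c := hmax hx
    have habs : (∫ y, ((x - y) ^ 2)⁻¹ ∂(μA N)) - ∫ y, ((x - y) ^ 2)⁻¹ ∂ν
        ≤ |(∫ y, ((x - y) ^ 2)⁻¹ ∂ν) - ∫ y, ((x - y) ^ 2)⁻¹ ∂(μA N)| := by
      rw [abs_sub_comm]
      exact le_abs_self _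
    linarith
  -- part 2
  have hpart2 : ∀ᶠ N in atTop, ∀ x ∈ K,
      x ∉ USet (μA N) ∧ PsiF (μA N) x = HF (μA N) x := by
    filter_upwards [haeN, hgb] with N hNae hNgb x hx
    haveI := hprob N
    have haex : ∀ᵐ y ∂(μA N), ρ ≤ |x - y| := hNae.mono fun y hy => hy x hx
    have hv : ∀ v : ℝ, 0 < v → ∫ y, ((x - y) ^ 2 + v ^ 2)⁻¹ ∂(μA N) ≤ 1 := by
      intro v hvpos
      refine le_trans (integral_mono_ae (int_sqv_kernel v hρ haex)
        (int_sq_kernel hρ haex) ?_) (hNgb x hx)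
      filter_upwards [haex] with y hy
      have h1 : (0:ℝ) < (x - y) ^ 2 := lt_of_lt_of_le (by positivity) (sep_sq hρ.le hy)
      exact inv_anti₀ h1 (by nlinarith [sq_nonneg v])
    have hv0 : vF (μA N) x = 0 := vF_eq_zero hv
    refine ⟨fun hU => ?_, psiF_eq_hF hv0⟩
    have : (0:ℝ) < vF (μA N) x := hU
    rw [hv0] at this
    exact lt_irrefl 0 this
  refine ⟨hpart1, hpart2, ?_⟩
  -- part 3
  rw [Metric.tendstoUniformlyOn_iff]
  intro ε hε
  filter_upwards [Metric.tendstoUniformlyOn_iff.mp hHUC ε hε, hpart2] with N h1 h2 x hx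
  rw [hpart1 x hx, (h2 x hx).2]
  have hHdist : dist (HF ν x) (HF (μA N) x)
      = dist (∫ y, (x - y)⁻¹ ∂ν) (∫ y, (x - y)⁻¹ ∂(μA N)) := by
    simp only [HF, Real.dist_eq, add_sub_add_left_eq_sub]
  rw [hHdist]
  exact h1 x hx
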